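/- Let E be a 2-dimensional real vector space, F an n-dimensional real vector space, α₁, α₂ ∈ F* linearly independent, and X = e₁⊗α₁ + e₂⊗α₂ for a basis {e₁,e₂} of E. Consider the map σ_X : E ⊗ Λ^{n-1}F* → S²E ⊗ Λ^nF* given by σ_X(e ⊗ φ) = (e∨e₁) ⊗ (α₁∧φ) + (e∨e₂) ⊗ (α₂∧φ). Then σ_X is surjective. -/

import Mathlib

open TensorProduct

noncomputable section

variable (K : Type) [Field K] (V : Type) [AddCommGroup V] [Module K V]

def SymRel (n : ℕ) : Submodule K (⨂[K]^n V) :=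
  Submodule.span K {x | ∃ (σ : Equiv.Perm (Fin n)) (t : ⨂[K]^n V),
    x = PiTensorProduct.reindex K (fun _ => V) σ t - t}

/-- The `n`-th symmetric power `S^n V`, as a quotient of the `n`-th tensor power. -/
def SymPow (n : ℕ) : Type := (⨂[K]^n V) ⧸ SymRel K V n

instance (n : ℕ) : AddCommGroup (SymPow K V n) :=
  inferInstanceAs (AddCommGroup ((⨂[K]^n V) ⧸ SymRel K V n))
instance (n : ℕ) : Module K (SymPow K V n) :=
  inferInstanceAs (Module K ((⨂[K]^n V) ⧸ SymRel K V n))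

/-- The symmetric product `v 0 ∨ ⋯ ∨ v (n-1)` in the symmetric power. -/
def SymPow.mk {n : ℕ} (v : Fin n → V) : SymPow K V n :=
  Submodule.Quotient.mk (PiTensorProduct.tprod K v)

/-- The wedge `v 0 ∧ ⋯ ∧ v (n-1)` as an element of the `n`-th exterior power. -/
def wedgeMk {n : ℕ} (v : Fin n → V) : ⋀[K]^n V :=
  ⟨ExteriorAlgebra.ιMulti K n v, ExteriorAlgebra.ιMulti_range K n ⟨v, rfl⟩⟩


-- AUXS
lemma wedgeMk_eq_zero' {n : ℕ} (v : Fin n → V) {i j : Fin n} (h : v i = v j) (hij : i ≠ j) :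
    wedgeMk K V v = 0 :=
  Subtype.ext <| by
    simpa [wedgeMk] using AlternatingMap.map_eq_zero_of_eq (ExteriorAlgebra.ιMulti K n) v h hij

lemma wedgeMk_swap' {n : ℕ} (v : Fin n → V) {i j : Fin n} (hij : i ≠ j) :
    wedgeMk K V (v ∘ Equiv.swap i j) = - wedgeMk K V v :=
  Subtype.ext <| by
    simpa [wedgeMk] using AlternatingMap.map_swap (ExteriorAlgebra.ιMulti K n) v hij

lemma exists_smul_wedgeMk' {n : ℕ} (β : Module.Basis (Fin n) K V) (w : ⋀[K]^n V) :
    ∃ c : K, w = c • wedgeMk K V β := by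
  classical
  set Ωv : ExteriorAlgebra K V := ExteriorAlgebra.ιMulti K n ⇑β with hΩv
  have h2 : Submodule.span K (Set.range (ExteriorAlgebra.ιMulti K n (M := V))) ≤
      Submodule.span K {Ωv} := by
    rw [Submodule.span_le]
    rintro _ ⟨v, rfl⟩
    have hcoe : ∀ u : Fin n → V, ExteriorAlgebra.ιMulti K n u =
        (ExteriorAlgebra.ιMulti K n).toMultilinearMap u := fun _ => rfl
    have hveq : v = fun i => ∑ j, β.repr (v i) j • β j :=
      funext fun i => (β.sum_repr (v i)).symm
    have expand : ExteriorAlgebra.ιMulti K n v =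
        ∑ f : Fin n → Fin n, (∏ i, β.repr (v i) (f i)) •
          ExteriorAlgebra.ιMulti K n (fun i => β (f i)) := by
      conv_lhs => rw [hveq]
      rw [hcoe, MultilinearMap.map_sum]
      refine Finset.sum_congr rfl fun f _ => ?_
      rw [hcoe]
      exact MultilinearMap.map_smul_univ _ _ _
    rw [expand]
    refine Submodule.sum_mem _ fun f _ => Submodule.smul_mem _ _ ?_
    by_cases hf : Function.Injective f
    · have hbij : Function.Bijective f := (Finite.injective_iff_bijective).1 hf
      let e : Equiv.Perm (Fin n) := Equiv.ofBijective f hbij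
      have h1 : (fun i => β (f i)) = ⇑β ∘ ⇑e := rfl
      have h2 : ExteriorAlgebra.ιMulti K n (⇑β ∘ ⇑e) =
          Equiv.Perm.sign e • ExteriorAlgebra.ιMulti K n ⇑β :=
        AlternatingMap.map_perm _ _ _
      rw [h1, h2]
      rcases Int.units_eq_one_or (Equiv.Perm.sign e) with h | h <;> rw [h]
      · simpa [hΩv] using Submodule.mem_span_singleton_self (R := K) Ωv
      · simpa [hΩv] using Submodule.neg_mem _ (Submodule.mem_span_singleton_self (R := K) Ωv)
    · have h0 : ExteriorAlgebra.ιMulti K n (fun i => β (f i)) = 0 :=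
        (ExteriorAlgebra.ιMulti K n).map_eq_zero_of_not_injective _
          (fun h => hf (Function.Injective.of_comp (f := ⇑β) h))
      rw [h0]
      exact Submodule.zero_mem _
  have hw : (w : ExteriorAlgebra K V) ∈ Submodule.span K {Ωv} := by
    apply h2
    rw [ExteriorAlgebra.ιMulti_span_fixedDegree]
    exact w.2
  obtain ⟨c, hc⟩ := Submodule.mem_span_singleton.1 hw
  exact ⟨c, Subtype.ext (by rw [← hc]; rfl)⟩

lemma symPowMk_mem' {n m : ℕ} (β : Module.Basis (Fin m) K V) (P : Submodule K (SymPow K V n))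
    (hP : ∀ f : Fin n → Fin m, SymPow.mk K V (fun i => β (f i)) ∈ P) (v : Fin n → V) :
    SymPow.mk K V v ∈ P := by
  classical
  let T : MultilinearMap K (fun _ : Fin n => V) (SymPow K V n) :=
    (SymRel K V n).mkQ.compMultilinearMap (PiTensorProduct.tprod K)
  have hT : ∀ v : Fin n → V, SymPow.mk K V v = T v := fun _ => rfl
  rw [hT]
  have expand : T v = ∑ f : Fin n → Fin m, (∏ i, β.repr (v i) (f i)) • T (fun i => β (f i)) := by
    calc T v = T (fun i => ∑ j, β.repr (v i) j • β j) := by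
          congr 1; funext i; exact (β.sum_repr (v i)).symm
      _ = _ := by
          rw [MultilinearMap.map_sum]
          exact Finset.sum_congr rfl fun f _ => MultilinearMap.map_smul_univ _ _ _
  rw [expand]
  exact Submodule.sum_mem _ fun f _ => Submodule.smul_mem _ _ (by rw [← hT]; exact hP f)

lemma symPow_mem' {n : ℕ} (P : Submodule K (SymPow K V n))
    (hP : ∀ v : Fin n → V, SymPow.mk K V v ∈ P) (s : SymPow K V n) : s ∈ P := by
  obtain ⟨y, rfl⟩ := Submodule.Quotient.mk_surjective (SymRel K V n) s
  have hle : Submodule.span K (Set.range (PiTensorProduct.tprod K (s := fun _ : Fin n => V))) ≤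
      Submodule.comap (SymRel K V n).mkQ P :=
    Submodule.span_le.2 (by rintro _ ⟨v, rfl⟩; exact hP v)
  exact hle (by rw [PiTensorProduct.span_tprod_eq_top]; trivial)


set_option maxHeartbeats 1000000 in
/-- Let `E` be a 2-dimensional real vector space with basis `{e₁,e₂}`,
`F` an `n`-dimensional real vector space (`n = p + 1`), and `α₁, α₂ ∈ F*` linearly
independent.  The map `σ_X : E ⊗ Λ^{n-1}F* → S²E ⊗ Λ^nF*` given by
`σ_X(e ⊗ φ) = (e∨e₁) ⊗ (α₁∧φ) + (e∨e₂) ⊗ (α₂∧φ)` is surjective. -/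
theorem stmt_3 (E F : Type) [AddCommGroup E] [Module ℝ E] [AddCommGroup F] [Module ℝ F]
    (b : Module.Basis (Fin 2) ℝ E)
    (p : ℕ) [FiniteDimensional ℝ F] (hF : Module.finrank ℝ F = p + 1)
    (α₁ α₂ : Module.Dual ℝ F) (hind : LinearIndependent ℝ ![α₁, α₂])
    (σX : E ⊗[ℝ] (⋀[ℝ]^p (Module.Dual ℝ F)) →ₗ[ℝ]
      (SymPow ℝ E 2) ⊗[ℝ] (⋀[ℝ]^(p + 1) (Module.Dual ℝ F)))
    (hσX : ∀ (e : E) (φ : Fin p → Module.Dual ℝ F),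
      σX (e ⊗ₜ[ℝ] wedgeMk ℝ (Module.Dual ℝ F) φ) =
        SymPow.mk ℝ E ![e, b 0] ⊗ₜ[ℝ] wedgeMk ℝ (Module.Dual ℝ F) (Fin.cons α₁ φ)
        + SymPow.mk ℝ E ![e, b 1] ⊗ₜ[ℝ] wedgeMk ℝ (Module.Dual ℝ F) (Fin.cons α₂ φ)) :
    Function.Surjective σX := by
  classical
  have hdual : Module.finrank ℝ (Module.Dual ℝ F) = p + 1 := by
    rw [Subspace.dual_finrank_eq, hF]
  have hp : 1 ≤ p := by
    have h2 : Fintype.card (Fin 2) ≤ Module.finrank ℝ (Module.Dual ℝ F) :=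
      hind.fintype_card_le_finrank
    simp [hdual] at h2; omega
  obtain ⟨q, rfl⟩ : ∃ q, p = q + 1 := ⟨p - 1, by omega⟩
  -- build a basis β of D with β 0 = α₁, β 1 = α₂
  have hne : α₁ ≠ α₂ := by
    intro h
    have h01 : ((0 : Fin 2) : Fin 2) = 1 := hind.injective (by simp [h])
    simp at h01
  have hs : LinearIndepOn ℝ id (Set.range ![α₁, α₂]) := hind.linearIndepOn_id
  let t := hs.extend (Set.subset_univ _)
  let B : Module.Basis t ℝ (Module.Dual ℝ F) := Module.Basis.extend hs
  haveI : Fintype t := FiniteDimensional.fintypeBasisIndex B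
  have hcard : Fintype.card t = q + 1 + 1 := by
    rw [← hdual]; exact (Module.finrank_eq_card_basis B).symm
  let f : Fin (q + 1 + 1) ≃ t := (Fintype.equivFinOfCardEq hcard).symm
  have hα₁t : α₁ ∈ t := hs.subset_extend _ ⟨0, rfl⟩
  have hα₂t : α₂ ∈ t := hs.subset_extend _ ⟨1, rfl⟩
  let i₁ : Fin (q + 1 + 1) := f.symm ⟨α₁, hα₁t⟩
  let i₂ : Fin (q + 1 + 1) := f.symm ⟨α₂, hα₂t⟩
  have hi12 : i₁ ≠ i₂ := fun h => hne (congrArg Subtype.val (f.symm.injective h))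
  have h01 : (0 : Fin (q + 1 + 1)) ≠ 1 := Fin.zero_ne_one
  let j : Fin (q + 1 + 1) := (Equiv.swap 0 i₁).symm i₂
  have hj0 : j ≠ 0 := by
    intro h
    apply hi12
    have : i₂ = Equiv.swap 0 i₁ j := ((Equiv.swap 0 i₁).apply_symm_apply i₂).symm
    rw [h] at this
    rw [this, Equiv.swap_apply_left]
  let π : Equiv.Perm (Fin (q + 1 + 1)) := (Equiv.swap 1 j).trans (Equiv.swap 0 i₁)
  have hπ0 : π 0 = i₁ := by
    show Equiv.swap 0 i₁ (Equiv.swap 1 j 0) = i₁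
    rw [Equiv.swap_apply_of_ne_of_ne h01 (Ne.symm hj0), Equiv.swap_apply_left]
  have hπ1 : π 1 = i₂ := by
    show Equiv.swap 0 i₁ (Equiv.swap 1 j 1) = i₂
    rw [Equiv.swap_apply_left]
    exact (Equiv.swap 0 i₁).apply_symm_apply i₂
  let β : Module.Basis (Fin (q + 1 + 1)) ℝ (Module.Dual ℝ F) := B.reindex (π.trans f).symm
  have hβ : ∀ i, β i = B (f (π i)) := by
    intro i
    rw [Module.Basis.reindex_apply, Equiv.symm_symm, Equiv.trans_apply]
  have hβ0 : β 0 = α₁ := by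
    rw [hβ, hπ0]
    show B (f (f.symm ⟨α₁, hα₁t⟩)) = α₁
    rw [f.apply_symm_apply]
    exact Module.Basis.extend_apply_self hs ⟨α₁, hα₁t⟩
  have hβ1 : β 1 = α₂ := by
    rw [hβ, hπ1]
    show B (f (f.symm ⟨α₂, hα₂t⟩)) = α₂
    rw [f.apply_symm_apply]
    exact Module.Basis.extend_apply_self hs ⟨α₂, hα₂t⟩
  set Ω : ⋀[ℝ]^(q + 1 + 1) (Module.Dual ℝ F) := wedgeMk ℝ (Module.Dual ℝ F) ⇑β with hΩ
  -- the two key membership claims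
  have claim1 : ∀ e : E, SymPow.mk ℝ E ![e, b 0] ⊗ₜ[ℝ] Ω ∈ LinearMap.range σX := by
    intro e
    refine ⟨e ⊗ₜ wedgeMk ℝ (Module.Dual ℝ F) (Fin.tail ⇑β), ?_⟩
    rw [hσX]
    have h1 : Fin.cons α₁ (Fin.tail ⇑β) = ⇑β := by
      rw [← hβ0]; exact Fin.cons_self_tail ⇑β
    have h2 : wedgeMk ℝ (Module.Dual ℝ F) (Fin.cons α₂ (Fin.tail ⇑β)) = 0 := by
      refine wedgeMk_eq_zero' ℝ (Module.Dual ℝ F) _ (i := 0) (j := 1) ?_ h01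
      rw [Fin.cons_zero, ← Fin.succ_zero_eq_one, Fin.cons_succ]
      show α₂ = β (Fin.succ 0)
      rw [Fin.succ_zero_eq_one, hβ1]
    rw [h1, h2, tmul_zero, add_zero]
  have claim2 : ∀ e : E, SymPow.mk ℝ E ![e, b 1] ⊗ₜ[ℝ] Ω ∈ LinearMap.range σX := by
    intro e
    set β' : Fin (q + 1 + 1) → Module.Dual ℝ F := ⇑β ∘ ⇑(Equiv.swap (0 : Fin (q + 1 + 1)) 1) with hβ'
    have hβ'0 : β' 0 = α₂ := by
      show β (Equiv.swap (0 : Fin (q + 1 + 1)) 1 0) = α₂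
      rw [Equiv.swap_apply_left, hβ1]
    have hβ'1 : β' 1 = α₁ := by
      show β (Equiv.swap (0 : Fin (q + 1 + 1)) 1 1) = α₁
      rw [Equiv.swap_apply_right, hβ0]
    have h1 : wedgeMk ℝ (Module.Dual ℝ F) (Fin.cons α₁ (Fin.tail β')) = 0 := by
      refine wedgeMk_eq_zero' ℝ (Module.Dual ℝ F) _ (i := 0) (j := 1) ?_ h01
      rw [Fin.cons_zero, ← Fin.succ_zero_eq_one, Fin.cons_succ]
      show α₁ = β' (Fin.succ 0)
      rw [Fin.succ_zero_eq_one, hβ'1]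
    have h2 : Fin.cons α₂ (Fin.tail β') = β' := by
      rw [← hβ'0]; exact Fin.cons_self_tail β'
    have h3 : wedgeMk ℝ (Module.Dual ℝ F) β' = -Ω := wedgeMk_swap' ℝ (Module.Dual ℝ F) ⇑β h01
    have hmem : -(SymPow.mk ℝ E ![e, b 1] ⊗ₜ[ℝ] Ω) ∈ LinearMap.range σX := by
      refine ⟨e ⊗ₜ wedgeMk ℝ (Module.Dual ℝ F) (Fin.tail β'), ?_⟩
      rw [hσX, h1, h2, h3, tmul_zero, zero_add, tmul_neg]
    obtain ⟨u, hu⟩ := hmem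
    refine ⟨-u, ?_⟩
    have hneg : σX (-u) = -σX u := map_neg σX u
    rw [hneg, hu]
    exact neg_neg (SymPow.mk ℝ E ![e, b 1] ⊗ₜ[ℝ] Ω)
  have key : ∀ (e : E) (i : Fin 2), SymPow.mk ℝ E ![e, b i] ⊗ₜ[ℝ] Ω ∈ LinearMap.range σX := by
    intro e i
    fin_cases i
    · exact claim1 e
    · exact claim2 e
  -- surjectivity
  rw [← LinearMap.range_eq_top, eq_top_iff]
  rintro x -
  induction x using TensorProduct.induction_on with
  | zero => exact Submodule.zero_mem _
  | add x y hx hy => exact Submodule.add_mem _ hx hy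
  | tmul s w =>
    obtain ⟨c, rfl⟩ := exists_smul_wedgeMk' ℝ (Module.Dual ℝ F) β w
    rw [tmul_smul]
    refine Submodule.smul_mem _ _ ?_
    let P : Submodule ℝ (SymPow ℝ E 2) :=
      (LinearMap.range σX).comap
        ((TensorProduct.mk ℝ (SymPow ℝ E 2) (⋀[ℝ]^(q + 1 + 1) (Module.Dual ℝ F))).flip Ω)
    have hP : ∀ v : Fin 2 → E, SymPow.mk ℝ E v ∈ P := by
      intro v
      refine symPowMk_mem' ℝ E b P (fun g => ?_) v
      have hfun : (fun i => b (g i)) = ![b (g 0), b (g 1)] := by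
        funext i; fin_cases i <;> rfl
      rw [Submodule.mem_comap, LinearMap.flip_apply, TensorProduct.mk_apply, hfun]
      exact key (b (g 0)) (g 1)
    have hmem := symPow_mem' ℝ E P hP s
    rwa [Submodule.mem_comap, LinearMap.flip_apply, TensorProduct.mk_apply] at hmem
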